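/- If x : ℝ → ℝ is continuously differentiable on [0,T] with |x'(t) − a₁| ≤ ε for all t ∈ [0,T] and some constants a₁, ε ≥ 0, then the estimator E(x,T) = (6/T³)·∫₀ᵀ (2τ − T)·x(τ) dτ satisfies |E(x,T) − a₁| ≤ (3/2)·ε. -/

import Mathlib

open MeasureTheory intervalIntegral

set_option maxHeartbeats 1600000 in
theorem estimator_error_bound (T ε a₁ : ℝ) (hT : 0 < T) (hε : 0 ≤ ε)
    (x x' : ℝ → ℝ)
    (hderiv : ∀ t ∈ Set.Icc (0 : ℝ) T, HasDerivAt x (x' t) t)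
    (hcont : ContinuousOn x' (Set.Icc 0 T))
    (hclose : ∀ t ∈ Set.Icc (0 : ℝ) T, |x' t - a₁| ≤ ε) :
    |(6 / T ^ 3) * (∫ τ in (0 : ℝ)..T, (2 * τ - T) * x τ) - a₁| ≤ (3 / 2) * ε := by
  have hT' : (0:ℝ) ≤ T := hT.le
  have hicc : Set.uIcc (0:ℝ) T = Set.Icc 0 T := Set.uIcc_of_le hT'
  have hx'int : IntervalIntegrable x' volume 0 T :=
    (hcont.mono (by rw [hicc])).intervalIntegrable
  -- integration by parts
  have hparts : ∫ τ in (0:ℝ)..T, (τ^2 - T*τ) * x' τ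
      = (T^2 - T*T) * x T - ((0:ℝ)^2 - T*0) * x 0 - ∫ τ in (0:ℝ)..T, (2*τ - T) * x τ := by
    apply intervalIntegral.integral_mul_deriv_eq_deriv_mul (u := fun τ => τ^2 - T*τ) (u' := fun τ => 2*τ - T)
    · intro t ht
      have h1 : HasDerivAt (fun τ : ℝ => τ^2 - T*τ) (2*t - T*1) t :=
        ((hasDerivAt_pow 2 t).sub ((hasDerivAt_id t).const_mul T)).congr_deriv (by ring)
      simpa using h1
    · intro t ht; rw [hicc] at ht; exact hderiv t ht
    · exact (Continuous.intervalIntegrable (by continuity) 0 T)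
    · exact hx'int
  have key : ∫ τ in (0:ℝ)..T, (2*τ - T) * x τ
      = ∫ τ in (0:ℝ)..T, (T*τ - τ^2) * x' τ := by
    have : ∫ τ in (0:ℝ)..T, (T*τ - τ^2) * x' τ
        = - ∫ τ in (0:ℝ)..T, (τ^2 - T*τ) * x' τ := by
      rw [← intervalIntegral.integral_neg]
      congr 1; ext τ; ring
    rw [this, hparts]; ring
  have hcontw : ContinuousOn (fun τ => T*τ - τ^2) (Set.uIcc 0 T) := by fun_prop
  have hwint : IntervalIntegrable (fun τ => (T*τ - τ^2) * x' τ) volume 0 T :=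
    hx'int.continuousOn_mul hcontw
  have hwa : IntervalIntegrable (fun τ => (T*τ - τ^2) * a₁) volume 0 T :=
    Continuous.intervalIntegrable (by continuity) 0 T
  have hwε : IntervalIntegrable (fun τ => (T*τ - τ^2) * ε) volume 0 T :=
    Continuous.intervalIntegrable (by continuity) 0 T
  -- integral of weight
  have hwval : ∫ τ in (0:ℝ)..T, (T*τ - τ^2) = T^3/6 := by
    have : ∫ τ in (0:ℝ)..T, (T*τ - τ^2)
        = (∫ τ in (0:ℝ)..T, T*τ) - ∫ τ in (0:ℝ)..T, τ^2 := by
      rw [← intervalIntegral.integral_sub]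
      · exact Continuous.intervalIntegrable (by continuity) 0 T
      · exact Continuous.intervalIntegrable (by continuity) 0 T
    rw [this, intervalIntegral.integral_const_mul, integral_id, integral_pow]
    ring
  have hsplit : ∫ τ in (0:ℝ)..T, (T*τ - τ^2) * (x' τ - a₁)
      = (∫ τ in (0:ℝ)..T, (T*τ - τ^2) * x' τ) - a₁ * (T^3/6) := by
    have : (fun τ => (T*τ - τ^2) * (x' τ - a₁))
        = fun τ => (T*τ - τ^2) * x' τ - (T*τ - τ^2) * a₁ := by ext τ; ring
    rw [this, intervalIntegral.integral_sub hwint hwa]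
    congr 1
    rw [show (fun τ => (T*τ - τ^2) * a₁) = fun τ => a₁ * (T*τ - τ^2) by ext τ; ring,
      intervalIntegral.integral_const_mul, hwval]
  have hdint : IntervalIntegrable (fun τ => (T*τ - τ^2) * (x' τ - a₁)) volume 0 T := by
    have := hwint.sub hwa
    have heq : (fun τ => (T*τ - τ^2) * (x' τ - a₁))
        = fun τ => (T*τ - τ^2) * x' τ - (T*τ - τ^2) * a₁ := by ext τ; ring
    rwa [heq]
  -- bound on the integral
  have hbound : |∫ τ in (0:ℝ)..T, (T*τ - τ^2) * (x' τ - a₁)| ≤ ε * (T^3/6) := by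
    have h1 : |∫ τ in (0:ℝ)..T, (T*τ - τ^2) * (x' τ - a₁)|
        ≤ ∫ τ in (0:ℝ)..T, |(T*τ - τ^2) * (x' τ - a₁)| :=
      intervalIntegral.abs_integral_le_integral_abs hT'
    have h2 : ∫ τ in (0:ℝ)..T, |(T*τ - τ^2) * (x' τ - a₁)|
        ≤ ∫ τ in (0:ℝ)..T, (T*τ - τ^2) * ε := by
      apply intervalIntegral.integral_mono_on hT' hdint.abs hwε
      intro t ht
      have hnn : 0 ≤ T*t - t^2 := by nlinarith [ht.1, ht.2]
      rw [abs_mul, abs_of_nonneg hnn]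
      exact mul_le_mul_of_nonneg_left (hclose t ht) hnn
    have h3 : ∫ τ in (0:ℝ)..T, (T*τ - τ^2) * ε = ε * (T^3/6) := by
      rw [show (fun τ => (T*τ - τ^2) * ε) = fun τ => ε * (T*τ - τ^2) by ext τ; ring,
        intervalIntegral.integral_const_mul, hwval]
    linarith
  have hT3 : (0:ℝ) < T^3 := by positivity
  have hE : (6 / T ^ 3) * (∫ τ in (0 : ℝ)..T, (2 * τ - T) * x τ) - a₁
      = (6 / T ^ 3) * ∫ τ in (0:ℝ)..T, (T*τ - τ^2) * (x' τ - a₁) := by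
    rw [key]
    have h := hsplit
    generalize (∫ τ in (0:ℝ)..T, (T*τ - τ^2) * (x' τ - a₁)) = I at h ⊢
    generalize (∫ τ in (0:ℝ)..T, (T*τ - τ^2) * x' τ) = J at h ⊢
    rw [h]
    have hT3 : (T:ℝ)^3 ≠ 0 := by positivity
    field_simp
  rw [hE]
  generalize (∫ τ in (0:ℝ)..T, (T*τ - τ^2) * (x' τ - a₁)) = I at hbound ⊢
  have h6 : (0:ℝ) ≤ 6 / T^3 := by positivity
  rw [abs_mul, abs_of_nonneg h6]
  have h1 : 6 / T^3 * |I| ≤ 6 / T^3 * (ε * (T^3/6)) :=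
    mul_le_mul_of_nonneg_left hbound h6
  have h2 : 6 / T^3 * (ε * (T^3/6)) = ε := by
    field_simp
  linarith
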